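/- arXiv:2510.22157 — 2 statements merged into one kernel-verified Lean document; each statement's English description precedes it below -/
import Mathlib

section
/- If the entries g^{(n)}_i are i.i.d. Rademacher, then the variance of the trace estimator equals Var(X) = ‖A‖_F² − tr(A)² + 2·Σ_{1 ≤ q < p ≤ d} Σ a_{j_1,…,j_{N−1},p} · a_{k_1,…,k_{N−1},q}, where for each pair p > q the inner sum ranges over all pairs of tuples (j_1,…,j_{N−1}), (k_1,…,k_{N−1}) with every j_t and every k_t in {p,q} and j_t ≠ k_t for all t ∈ {1,…,N−1}. -/
open MeasureTheory ProbabilityTheory Finset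

/-- The diagonal estimator: `y i = Σ_j a_{j_1,…,j_{N-1},i} ∏_t g^{(t)}_{j_t} g^{(t)}_i`,
where the tensor has order `N = M + 1`. -/
noncomputable def diagEstimator {M d : ℕ} (a : (Fin (M + 1) → Fin d) → ℝ)
    {Ω : Type*} (g : Fin M → Fin d → Ω → ℝ) (i : Fin d) (ω : Ω) : ℝ :=
  ∑ j : Fin M → Fin d, a (Fin.snoc j i) * ∏ t : Fin M, g t (j t) ω * g t i ω

/-- The trace estimator `X = Σ_i y_i`. -/
noncomputable def traceEstimator {M d : ℕ} (a : (Fin (M + 1) → Fin d) → ℝ)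
    {Ω : Type*} (g : Fin M → Fin d → Ω → ℝ) (ω : Ω) : ℝ :=
  ∑ i : Fin d, diagEstimator a g i ω

/-- The Rademacher distribution: uniform on `{-1, +1}`. -/
noncomputable def radMeasure : Measure ℝ :=
  (2 : ENNReal)⁻¹ • Measure.dirac 1 + (2 : ENNReal)⁻¹ • Measure.dirac (-1)

set_option linter.unusedSectionVars false
set_option linter.unusedVariables false

namespace TraceVar

lemma even_ite_add_ite {P Q : Prop} [Decidable P] [Decidable Q] :
    Even ((if P then 1 else 0) + (if Q then 1 else 0) : ℕ) ↔ (P ↔ Q) := by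
  by_cases hP : P <;> by_cases hQ : Q <;> simp [hP, hQ, Nat.even_iff]

lemma pairing_iff {α : Type*} (u v w z : α) :
    (∀ x : α, ((u = x ↔ v = x) ↔ (w = x ↔ z = x))) ↔
      (u = v ∧ w = z) ∨ (u = w ∧ v = z) ∨ (u = z ∧ v = w) := by
  classical
  constructor
  · intro H
    by_cases huv : u = v
    · subst huv
      exact Or.inl ⟨rfl, (((H w).mp Iff.rfl).mp rfl).symm⟩
    · by_cases huw : u = w
      · subst huw
        have h := H v
        have hvv : v = v := rfl
        refine Or.inr (Or.inl ⟨rfl, ?_⟩)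
        have : z = v := by tauto
        exact this.symm
      · by_cases huz : u = z
        · subst huz
          have h := H v
          have hvv : v = v := rfl
          refine Or.inr (Or.inr ⟨rfl, ?_⟩)
          have : w = v := by tauto
          exact this.symm
        · exfalso
          have h := H u
          have huu : u = u := rfl
          have hvu : ¬ v = u := fun hh => huv hh.symm
          have hwu : ¬ w = u := fun hh => huw hh.symm
          have hzu : ¬ z = u := fun hh => huz hh.symm
          tauto
  · rintro (⟨rfl, rfl⟩ | ⟨rfl, rfl⟩ | ⟨rfl, rfl⟩) x <;> constructor <;> intro h <;> tauto

lemma integrable_pow_dirac (n : ℕ) (c : ℝ) :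
    Integrable (fun x : ℝ => x ^ n) (Measure.dirac c) := by
  refine ⟨((continuous_pow n).stronglyMeasurable).aestronglyMeasurable, ?_⟩
  rw [HasFiniteIntegral, lintegral_dirac' _ (by measurability)]
  exact ENNReal.coe_lt_top

lemma integrable_pow_radMeasure (n : ℕ) :
    Integrable (fun x : ℝ => x ^ n) radMeasure := by
  rw [radMeasure]
  exact ((integrable_pow_dirac n 1).smul_measure (by simp)).add_measure
    ((integrable_pow_dirac n (-1)).smul_measure (by simp))

lemma integral_radMeasure_pow (n : ℕ) :
    (∫ x, x ^ n ∂radMeasure) = if Even n then 1 else 0 := by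
  rw [radMeasure,
    integral_add_measure ((integrable_pow_dirac n 1).smul_measure (by simp))
      ((integrable_pow_dirac n (-1)).smul_measure (by simp)),
    integral_smul_measure, integral_smul_measure,
    integral_dirac, integral_dirac]
  rcases Nat.even_or_odd n with h | h
  · rw [if_pos h, h.neg_one_pow, one_pow]
    simp [ENNReal.toReal_inv]
    norm_num
  · rw [if_neg (Nat.not_even_iff_odd.mpr h), h.neg_one_pow, one_pow]
    simp [ENNReal.toReal_inv]


lemma even_ite {P : Prop} [Decidable P] :
    Even ((if P then 1 else 0) : ℕ) ↔ ¬ P := by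
  by_cases hP : P <;> simp [hP, Nat.even_iff]

def expo {M d : ℕ} (z : (Fin M → Fin d) × Fin d) (p : Fin M × Fin d) : ℕ :=
  (if z.1 p.1 = p.2 then 1 else 0) + (if z.2 = p.2 then 1 else 0)

lemma prod_expand {M d : ℕ} {Ω : Type*} (g : Fin M → Fin d → Ω → ℝ)
    (j : Fin M → Fin d) (i : Fin d) (ω : Ω) :
    (∏ t : Fin M, g t (j t) ω * g t i ω)
      = ∏ p : Fin M × Fin d, g p.1 p.2 ω ^ expo (j, i) p := by
  rw [Fintype.prod_prod_type]
  refine Finset.prod_congr rfl fun t _ => ?_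
  simp only [expo, pow_add, Finset.prod_mul_distrib, pow_ite, pow_one, pow_zero]
  rw [Finset.prod_ite_eq, Finset.prod_ite_eq]
  simp

lemma cond1_iff {M d : ℕ} (j : Fin M → Fin d) (i : Fin d) :
    (∀ p : Fin M × Fin d, Even (expo (j, i) p)) ↔ j = fun _ => i := by
  simp only [Prod.forall, expo, even_ite_add_ite]
  constructor
  · intro h
    funext t
    exact ((h t (j t)).mp rfl).symm
  · rintro rfl t x
    exact Iff.rfl

lemma cond2_iff {M d : ℕ} (j k : Fin M → Fin d) (i q : Fin d) :
    (∀ p : Fin M × Fin d, Even (expo (j, i) p + expo (k, q) p)) ↔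
      ∀ t, (j t = i ∧ k t = q) ∨ (j t = k t ∧ i = q) ∨ (j t = q ∧ i = k t) := by
  simp only [Prod.forall, expo, Nat.even_add, even_ite, not_iff_not]
  exact forall_congr' fun t => pairing_iff (j t) i (k t) q

def snocE (M d : ℕ) : ((Fin M → Fin d) × Fin d) ≃ (Fin (M + 1) → Fin d) where
  toFun z := Fin.snoc z.1 z.2
  invFun f := (Fin.init f, f (Fin.last M))
  left_inv := by rintro ⟨j, i⟩; simp [Fin.init_snoc, Fin.snoc_last]
  right_inv f := Fin.snoc_init_self f

lemma snoc_const {M d : ℕ} (i : Fin d) :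
    (Fin.snoc (fun _ : Fin M => i) i) = fun _ : Fin (M + 1) => i := by
  funext x
  refine Fin.lastCases ?_ ?_ x
  · simp
  · intro t; simp

lemma snocE_apply {M d : ℕ} (z : (Fin M → Fin d) × Fin d) :
    snocE M d z = Fin.snoc z.1 z.2 := rfl

lemma sum_split {M d : ℕ} (a : (Fin (M + 1) → Fin d) → ℝ) :
    (∑ z : (Fin M → Fin d) × Fin d, ∑ w : (Fin M → Fin d) × Fin d,
      a (Fin.snoc z.1 z.2) * a (Fin.snoc w.1 w.2) *
        (if (∀ p, Even (expo z p + expo w p)) then 1 else 0))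
    = (∑ x : Fin (M + 1) → Fin d, (a x) ^ 2)
      + 2 * ∑ p : Fin d, ∑ q ∈ Finset.Iio p,
        (∑ jk ∈ Finset.univ.filter (fun jk : (Fin M → Fin d) × (Fin M → Fin d) =>
          ∀ t, (jk.1 t = p ∨ jk.1 t = q) ∧ (jk.2 t = p ∨ jk.2 t = q) ∧ jk.1 t ≠ jk.2 t),
        a (Fin.snoc jk.1 p) * a (Fin.snoc jk.2 q)) := by
  classical
  set S : Fin d → Fin d → ℝ := fun p q =>
    ∑ jk ∈ Finset.univ.filter (fun jk : (Fin M → Fin d) × (Fin M → Fin d) =>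
      ∀ t, (jk.1 t = p ∨ jk.1 t = q) ∧ (jk.2 t = p ∨ jk.2 t = q) ∧ jk.1 t ≠ jk.2 t),
      a (Fin.snoc jk.1 p) * a (Fin.snoc jk.2 q) with hS
  set T : Fin d → Fin d → ℝ := fun i q => ∑ j : Fin M → Fin d, ∑ k : Fin M → Fin d,
    a (Fin.snoc j i) * a (Fin.snoc k q) *
      (if (∀ t, (j t = i ∧ k t = q) ∨ (j t = k t ∧ i = q) ∨ (j t = q ∧ i = k t))
        then 1 else 0) with hT
  have step1 : (∑ z : (Fin M → Fin d) × Fin d, ∑ w : (Fin M → Fin d) × Fin d,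
      a (Fin.snoc z.1 z.2) * a (Fin.snoc w.1 w.2) *
        (if (∀ p, Even (expo z p + expo w p)) then 1 else 0))
      = ∑ i : Fin d, ∑ q : Fin d, T i q := by
    simp_rw [Fintype.sum_prod_type_right, cond2_iff, hT]
    exact Finset.sum_congr rfl fun i _ => Finset.sum_comm
  have hdiag : ∀ i, T i i = ∑ j : Fin M → Fin d, a (Fin.snoc j i) ^ 2 := by
    intro i
    have hc : ∀ j k : Fin M → Fin d,
        (∀ t, (j t = i ∧ k t = i) ∨ (j t = k t ∧ i = i) ∨ (j t = i ∧ i = k t)) ↔ j = k := by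
      intro j k
      constructor
      · intro h; funext t
        rcases h t with ⟨h1, h2⟩ | ⟨h1, _⟩ | ⟨h1, h2⟩ <;> simp_all
      · rintro rfl t; exact Or.inr (Or.inl ⟨rfl, rfl⟩)
    rw [hT]
    refine Finset.sum_congr rfl fun j _ => ?_
    rw [Finset.sum_eq_single_of_mem j (Finset.mem_univ j)
      (fun k _ hkj => by rw [if_neg (fun h => hkj ((hc j k).mp h).symm), mul_zero]),
      if_pos ((hc j j).mpr rfl), mul_one, sq]
  have hoff : ∀ i q : Fin d, i ≠ q → T i q = S i q := by
    intro i q hiq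
    simp only [hT, hS]
    rw [Finset.sum_filter, Fintype.sum_prod_type]
    refine Finset.sum_congr rfl fun j _ => Finset.sum_congr rfl fun k _ => ?_
    rw [mul_ite, mul_one, mul_zero]
    refine (if_congr ?_ rfl rfl).symm
    constructor
    · intro h t
      obtain ⟨hj, hk, hne⟩ := h t
      rcases hj with hj | hj <;> rcases hk with hk | hk
      · exact absurd (hj.trans hk.symm) hne
      · exact Or.inl ⟨hj, hk⟩
      · exact Or.inr (Or.inr ⟨hj, hk.symm⟩)
      · exact absurd (hj.trans hk.symm) hne
    · intro h t
      rcases h t with ⟨h1, h2⟩ | ⟨_, h2⟩ | ⟨h1, h2⟩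
      · exact ⟨Or.inl h1, Or.inr h2, show j t ≠ k t by rw [h1, h2]; exact hiq⟩
      · exact absurd h2 hiq
      · exact ⟨Or.inr h1, Or.inl h2.symm,
          show j t ≠ k t by rw [h1, ← h2]; exact fun hh => hiq hh.symm⟩
  have hdiagtot : (∑ i : Fin d, ∑ j : Fin M → Fin d, a (Fin.snoc j i) ^ 2)
      = ∑ x : Fin (M + 1) → Fin d, a x ^ 2 := by
    refine (Fintype.sum_prod_type_right
      (f := fun z : (Fin M → Fin d) × Fin d => a (Fin.snoc z.1 z.2) ^ 2)).symm.trans ?_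
    exact Fintype.sum_equiv (snocE M d) _ _ (fun z => by rw [snocE_apply])
  have hsymm : ∀ p q : Fin d, S q p = S p q := by
    intro p q
    rw [hS]
    refine Finset.sum_bijective (fun jk => (jk.2, jk.1)) ⟨fun x y h => ?_, fun x => ⟨(x.2, x.1), rfl⟩⟩
      ?_ ?_
    · exact Prod.ext (congrArg Prod.snd h) (congrArg Prod.fst h)
    · intro jk
      simp only [Finset.mem_filter, Finset.mem_univ, true_and]
      constructor
      · intro h t
        obtain ⟨h1, h2, h3⟩ := h t
        exact ⟨by tauto, by tauto, fun hh => h3 hh.symm⟩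
      · intro h t
        obtain ⟨h1, h2, h3⟩ := h t
        exact ⟨by tauto, by tauto, fun hh => h3 hh.symm⟩
    · intro jk _
      exact mul_comm _ _
  have herase : ∀ i : Fin d, (Finset.univ : Finset (Fin d)).erase i
      = Finset.Iio i ∪ Finset.Ioi i := by
    intro i; ext q
    simp only [Finset.mem_erase, Finset.mem_univ, and_true, Finset.mem_union,
      Finset.mem_Iio, Finset.mem_Ioi]
    exact ne_iff_lt_or_gt
  have hdisj : ∀ i : Fin d, Disjoint (Finset.Iio i) (Finset.Ioi i) := by
    intro i
    refine Finset.disjoint_left.mpr fun q hq hq' => ?_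
    exact absurd (Finset.mem_Iio.mp hq) (not_lt.mpr (le_of_lt (Finset.mem_Ioi.mp hq')))
  have hofftot : (∑ i : Fin d, ∑ q ∈ (Finset.univ : Finset (Fin d)).erase i, S i q)
      = 2 * ∑ p : Fin d, ∑ q ∈ Finset.Iio p, S p q := by
    simp_rw [herase]
    have : ∀ i : Fin d, (∑ q ∈ Finset.Iio i ∪ Finset.Ioi i, S i q)
        = (∑ q ∈ Finset.Iio i, S i q) + ∑ q ∈ Finset.Ioi i, S i q :=
      fun i => Finset.sum_union (hdisj i)
    simp_rw [this]
    rw [Finset.sum_add_distrib]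
    have hswap : (∑ i : Fin d, ∑ q ∈ Finset.Ioi i, S i q)
        = ∑ p : Fin d, ∑ q ∈ Finset.Iio p, S q p :=
      Finset.sum_comm' (s := (Finset.univ : Finset (Fin d))) (t := fun i => Finset.Ioi i)
        (t' := (Finset.univ : Finset (Fin d))) (s' := fun q => Finset.Iio q) (f := S)
        (fun x y => by simp only [Finset.mem_univ, Finset.mem_Ioi, Finset.mem_Iio, true_and,
          and_true])
    rw [hswap]
    have hflip : (∑ p : Fin d, ∑ q ∈ Finset.Iio p, S q p)
        = ∑ p : Fin d, ∑ q ∈ Finset.Iio p, S p q :=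
      Finset.sum_congr rfl fun p _ => Finset.sum_congr rfl fun q _ => hsymm p q
    rw [hflip]
    ring
  rw [step1]
  have split : ∀ i : Fin d, (∑ q : Fin d, T i q)
      = T i i + ∑ q ∈ (Finset.univ : Finset (Fin d)).erase i, T i q :=
    fun i => (Finset.add_sum_erase _ _ (Finset.mem_univ i)).symm
  simp_rw [split]
  rw [Finset.sum_add_distrib]
  have h1 : (∑ i : Fin d, T i i) = ∑ x : Fin (M + 1) → Fin d, a x ^ 2 := by
    rw [← hdiagtot]; exact Finset.sum_congr rfl fun i _ => hdiag i
  have h2 : (∑ i : Fin d, ∑ q ∈ (Finset.univ : Finset (Fin d)).erase i, T i q)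
      = 2 * ∑ p : Fin d, ∑ q ∈ Finset.Iio p, S p q := by
    rw [← hofftot]
    refine Finset.sum_congr rfl fun i _ => Finset.sum_congr rfl fun q hq => ?_
    exact hoff i q (fun hh => (Finset.mem_erase.mp hq).1 hh.symm)
  rw [h1, h2]

variable {Ω : Type*} [MeasureSpace Ω] [IsProbabilityMeasure (ℙ : Measure Ω)]

lemma moment_pow {Y : Ω → ℝ} (hY : Measurable Y)
    (hD : Measure.map Y ℙ = radMeasure) (n : ℕ) :
    Integrable (fun ω => Y ω ^ n) ℙ ∧
      (∫ ω, Y ω ^ n) = if Even n then 1 else 0 := by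
  have hsm : StronglyMeasurable fun x : ℝ => x ^ n := (continuous_pow n).stronglyMeasurable
  constructor
  · have := (integrable_map_measure (μ := ℙ) (f := Y) (g := fun x : ℝ => x ^ n)
      (by rw [hD]; exact hsm.aestronglyMeasurable) hY.aemeasurable).mp
      (by rw [hD]; exact integrable_pow_radMeasure n)
    exact this
  · have := integral_map (μ := ℙ) hY.aemeasurable
      (f := fun x : ℝ => x ^ n) (by rw [hD]; exact hsm.aestronglyMeasurable)
    rw [hD, integral_radMeasure_pow] at this
    exact this.symm

lemma integral_prod_indep {ι : Type*} [DecidableEq ι] (f : ι → Ω → ℝ)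
    (hmeas : ∀ i, Measurable (f i))
    (hindep : iIndepFun f ℙ)
    (hint : ∀ i, Integrable (f i) ℙ) (s : Finset ι) :
    Integrable (fun ω => ∏ i ∈ s, f i ω) ℙ ∧
      (∫ ω, ∏ i ∈ s, f i ω) = ∏ i ∈ s, ∫ ω, f i ω := by
  induction s using Finset.induction_on with
  | empty => simp
  | @insert c s hnot ih =>
    have hIndep : IndepFun (f c) (∏ j ∈ s, f j) ℙ :=
      (hindep.indepFun_finsetProd_of_notMem hmeas hnot).symm
    have hps : Integrable (∏ j ∈ s, f j) ℙ := by
      have h := ih.1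
      have : (∏ j ∈ s, f j) = fun ω => ∏ i ∈ s, f i ω := by
        funext ω; simp [Finset.prod_apply]
      rw [this]; exact h
    have hmul : Integrable (f c * ∏ j ∈ s, f j) ℙ := hIndep.integrable_mul (hint c) hps
    have heq : (fun ω => ∏ i ∈ insert c s, f i ω) = f c * ∏ j ∈ s, f j := by
      funext ω; simp [Finset.prod_insert hnot, Finset.prod_apply]
    constructor
    · rw [heq]; exact hmul
    · rw [heq, Finset.prod_insert hnot,
        hIndep.integral_mul_eq_mul_integral (hint c).aestronglyMeasurable hps.aestronglyMeasurable, ← ih.2]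
      congr 1
      apply integral_congr_ae
      filter_upwards with ω using by simp [Finset.prod_apply]

lemma rad_prod_moment {M d : ℕ} (g : Fin M → Fin d → Ω → ℝ)
    (hmeas : ∀ n i, Measurable (g n i))
    (hindep : iIndepFun (fun p : Fin M × Fin d => g p.1 p.2) ℙ)
    (hdist : ∀ n i, Measure.map (g n i) ℙ = radMeasure)
    (c : Fin M × Fin d → ℕ) :
    Integrable (fun ω => ∏ p : Fin M × Fin d, g p.1 p.2 ω ^ c p) ℙ ∧
      (∫ ω, ∏ p : Fin M × Fin d, g p.1 p.2 ω ^ c p)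
        = if (∀ p, Even (c p)) then 1 else 0 := by
  have hindep' : iIndepFun
      (fun p ω => g p.1 p.2 ω ^ c p) ℙ :=
    hindep.comp (fun p x => x ^ c p) (fun p => measurable_id.pow_const (c p))
  have hm : ∀ p : Fin M × Fin d, Measurable fun ω => g p.1 p.2 ω ^ c p :=
    fun p => (hmeas p.1 p.2).pow_const (c p)
  have hi : ∀ p : Fin M × Fin d, Integrable (fun ω => g p.1 p.2 ω ^ c p) ℙ :=
    fun p => (moment_pow (hmeas p.1 p.2) (hdist p.1 p.2) (c p)).1
  obtain ⟨h1, h2⟩ := integral_prod_indep _ hm hindep' hi Finset.univ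
  refine ⟨h1, ?_⟩
  rw [h2]
  by_cases H : ∀ p, Even (c p)
  · rw [if_pos H]
    apply Finset.prod_eq_one
    intro p _
    rw [(moment_pow (hmeas p.1 p.2) (hdist p.1 p.2) (c p)).2, if_pos (H p)]
  · rw [if_neg H]
    push_neg at H
    obtain ⟨p, hp⟩ := H
    exact Finset.prod_eq_zero (Finset.mem_univ p)
      (by rw [(moment_pow (hmeas p.1 p.2) (hdist p.1 p.2) (c p)).2, if_neg hp])


end TraceVar

theorem trace_estimator_variance_rademacher
    {M d : ℕ} (hM : 1 ≤ M) (hd : 1 ≤ d)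
    (a : (Fin (M + 1) → Fin d) → ℝ)
    {Ω : Type*} [MeasureSpace Ω] [IsProbabilityMeasure (ℙ : Measure Ω)]
    (g : Fin M → Fin d → Ω → ℝ)
    (hmeas : ∀ n i, Measurable (g n i))
    (hindep : iIndepFun (fun p : Fin M × Fin d => g p.1 p.2) ℙ)
    (hdist : ∀ n i, Measure.map (g n i) ℙ = radMeasure)
    :
    variance (traceEstimator a g) ℙ =
      (∑ x : Fin (M + 1) → Fin d, (a x) ^ 2) - (∑ i : Fin d, a (fun _ => i)) ^ 2 +
      2 * ∑ p : Fin d, ∑ q ∈ Finset.Iio p,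
        (∑ jk ∈ Finset.univ.filter (fun jk : (Fin M → Fin d) × (Fin M → Fin d) =>
          ∀ t, (jk.1 t = p ∨ jk.1 t = q) ∧ (jk.2 t = p ∨ jk.2 t = q) ∧ jk.1 t ≠ jk.2 t),
        a (Fin.snoc jk.1 p) * a (Fin.snoc jk.2 q)) := by
  classical
  set F : ((Fin M → Fin d) × Fin d) → Ω → ℝ :=
    fun z ω => ∏ p : Fin M × Fin d, g p.1 p.2 ω ^ TraceVar.expo z p with hF
  have hFint : ∀ z, Integrable (F z) ℙ := fun z =>
    (TraceVar.rad_prod_moment g hmeas hindep hdist (TraceVar.expo z)).1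
  have hFval : ∀ z, (∫ ω, F z ω) = if (∀ p, Even (TraceVar.expo z p)) then 1 else 0 :=
    fun z => (TraceVar.rad_prod_moment g hmeas hindep hdist (TraceVar.expo z)).2
  have hFFeq : ∀ z w, (fun ω => F z ω * F w ω)
      = fun ω => ∏ p : Fin M × Fin d,
          g p.1 p.2 ω ^ (TraceVar.expo z p + TraceVar.expo w p) := by
    intro z w; funext ω
    simp only [hF, pow_add, Finset.prod_mul_distrib]
  have hFFint : ∀ z w, Integrable (fun ω => F z ω * F w ω) ℙ := fun z w => by
    rw [hFFeq]
    exact (TraceVar.rad_prod_moment g hmeas hindep hdist _).1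
  have hFFval : ∀ z w, (∫ ω, F z ω * F w ω)
      = if (∀ p, Even (TraceVar.expo z p + TraceVar.expo w p)) then 1 else 0 := fun z w => by
    rw [hFFeq]
    exact (TraceVar.rad_prod_moment g hmeas hindep hdist _).2
  have hXeq : traceEstimator a g
      = fun ω => ∑ z : (Fin M → Fin d) × Fin d, a (Fin.snoc z.1 z.2) * F z ω := by
    funext ω
    rw [Fintype.sum_prod_type]
    unfold traceEstimator diagEstimator
    rw [Finset.sum_comm]
    refine Finset.sum_congr rfl fun j _ => Finset.sum_congr rfl fun i _ => ?_
    rw [TraceVar.prod_expand g j i ω]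
  have hXint : Integrable (traceEstimator a g) ℙ := by
    rw [hXeq]
    exact integrable_finset_sum _ fun z _ => (hFint z).const_mul _
  have hEX : (∫ ω, traceEstimator a g ω) = ∑ i : Fin d, a (fun _ => i) := by
    rw [hXeq, integral_finset_sum _ fun z _ => (hFint z).const_mul _]
    simp_rw [integral_const_mul, hFval, TraceVar.cond1_iff]
    rw [Fintype.sum_prod_type_right]
    refine Finset.sum_congr rfl fun i _ => ?_
    rw [Finset.sum_eq_single_of_mem (fun _ => i) (Finset.mem_univ _)
      (fun j _ hji => by rw [if_neg hji, mul_zero]),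
      if_pos rfl, mul_one, TraceVar.snoc_const]
  have hsq : (fun ω => traceEstimator a g ω ^ 2)
      = fun ω => ∑ z : (Fin M → Fin d) × Fin d, ∑ w : (Fin M → Fin d) × Fin d,
          a (Fin.snoc z.1 z.2) * a (Fin.snoc w.1 w.2) * (F z ω * F w ω) := by
    funext ω
    rw [sq, hXeq, Finset.sum_mul_sum]
    exact Finset.sum_congr rfl fun z _ => Finset.sum_congr rfl fun w _ => by ring
  have hsqint : Integrable (fun ω => traceEstimator a g ω ^ 2) ℙ := by
    rw [hsq]
    exact integrable_finset_sum _ fun z _ =>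
      integrable_finset_sum _ fun w _ => (hFFint z w).const_mul _
  have hmem : MemLp (traceEstimator a g) 2 ℙ :=
    (memLp_two_iff_integrable_sq hXint.aestronglyMeasurable).mpr hsqint
  have hEX2 : (∫ ω, traceEstimator a g ω ^ 2)
      = ∑ z : (Fin M → Fin d) × Fin d, ∑ w : (Fin M → Fin d) × Fin d,
          a (Fin.snoc z.1 z.2) * a (Fin.snoc w.1 w.2) *
            (if (∀ p, Even (TraceVar.expo z p + TraceVar.expo w p)) then 1 else 0) := by
    rw [hsq, integral_finset_sum _ fun z _ =>
      integrable_finset_sum _ fun w _ => (hFFint z w).const_mul _]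
    refine Finset.sum_congr rfl fun z _ => ?_
    rw [integral_finset_sum _ fun w _ => (hFFint z w).const_mul _]
    refine Finset.sum_congr rfl fun w _ => ?_
    rw [integral_const_mul, hFFval]
  rw [variance_eq_sub hmem]
  have hpow : (∫ ω, (traceEstimator a g ^ 2) ω) = ∫ ω, traceEstimator a g ω ^ 2 := rfl
  rw [hpow, hEX2, hEX, TraceVar.sum_split a]
  ring
end

section
/- If the entries g^{(n)}_i are i.i.d. Rademacher, then the variance of the trace estimator satisfies Var(X) ≤ 2·( ‖A‖_F² − Σ_{j=1}^d a²_{j,…,j} ). -/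
open MeasureTheory ProbabilityTheory Finset

lemma integrable_dirac' {f : ℝ → ℝ} (hf : Measurable f) (a : ℝ) :
    Integrable f (Measure.dirac a) := by
  constructor
  · exact hf.aestronglyMeasurable
  · rw [HasFiniteIntegral, lintegral_dirac]
    exact ENNReal.coe_lt_top

lemma radMeasure_integral_pow (n : ℕ) :
    ∫ x : ℝ, x ^ n ∂radMeasure = if Even n then 1 else 0 := by
  have hm : Measurable fun x : ℝ => x ^ n := measurable_id.pow_const n
  rw [radMeasure, integral_add_measure, integral_smul_measure, integral_smul_measure,
    integral_dirac, integral_dirac]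
  · rcases Nat.even_or_odd n with h | h
    · simp [h, Even.neg_pow, ENNReal.toReal_inv]
      norm_num
    · simp [h, h.neg_pow, Nat.not_even_iff_odd.mpr h, ENNReal.toReal_inv]
  · exact (integrable_dirac' hm 1).smul_measure (by norm_num)
  · exact (integrable_dirac' hm (-1)).smul_measure (by norm_num)

lemma radMeasure_compl_pm : radMeasure ({1, -1} : Set ℝ)ᶜ = 0 := by
  rw [radMeasure]
  simp [Measure.dirac_apply' _ (((measurableSet_singleton (1:ℝ)).union
    (measurableSet_singleton (-1:ℝ))).compl)]

lemma aux_integrable {Ω : Type*} [MeasurableSpace Ω] {μ : Measure Ω} [IsProbabilityMeasure μ]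
    {f : Ω → ℝ} (hm : Measurable f) (hb : ∀ᵐ ω ∂μ, |f ω| ≤ 1) : Integrable f μ := by
  refine Integrable.mono' (integrable_const 1) hm.aestronglyMeasurable ?_
  filter_upwards [hb] with ω h using by simpa using h

lemma indep_prod_integral {ι Ω : Type*} [MeasurableSpace Ω] {μ : Measure Ω}
    [IsProbabilityMeasure μ]
    (f : ι → Ω → ℝ) (hind : iIndepFun f μ)
    (hm : ∀ i, Measurable (f i)) (hb : ∀ i, ∀ᵐ ω ∂μ, |f i ω| ≤ 1) (s : Finset ι) :
    (∀ᵐ ω ∂μ, |∏ i ∈ s, f i ω| ≤ 1) ∧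
    ∫ ω, ∏ i ∈ s, f i ω ∂μ = ∏ i ∈ s, ∫ ω, f i ω ∂μ := by
  classical
  induction s using Finset.induction_on with
  | empty => simp
  | insert i s hi ih =>
    obtain ⟨ihb, ihe⟩ := ih
    have hprodmeas : Measurable fun ω => ∏ j ∈ s, f j ω :=
      Finset.measurable_prod _ fun j _ => hm j
    have hbnd : ∀ᵐ ω ∂μ, |∏ j ∈ insert i s, f j ω| ≤ 1 := by
      filter_upwards [ihb, hb i] with ω h1 h2
      rw [Finset.prod_insert hi, abs_mul]
      calc |f i ω| * |∏ j ∈ s, f j ω| ≤ 1 * 1 := by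
            exact mul_le_mul h2 h1 (abs_nonneg _) zero_le_one
        _ = 1 := one_mul 1
    refine ⟨hbnd, ?_⟩
    have hIndep : IndepFun (∏ j ∈ s, f j) (f i) μ :=
      hind.indepFun_finsetProd_of_notMem hm hi
    have h1 : Integrable (fun ω => ∏ j ∈ s, f j ω) μ := aux_integrable hprodmeas ihb
    have h2 : Integrable (f i) μ := aux_integrable (hm i) (hb i)
    have key := hIndep.symm.integral_mul_eq_mul_integral h2.1 (by
      convert h1.1 using 1; ext ω; simp [Finset.prod_apply])
    simp only [Finset.prod_insert hi]
    have : (fun ω => f i ω * ∏ j ∈ s, f j ω) = f i * ∏ j ∈ s, f j := by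
      ext ω; simp [Finset.prod_apply]
    calc ∫ ω, f i ω * ∏ j ∈ s, f j ω ∂μ = ∫ ω, (f i * ∏ j ∈ s, f j) ω ∂μ := by rw [this]
      _ = (∫ ω, f i ω ∂μ) * ∫ ω, (∏ j ∈ s, f j) ω ∂μ := key
      _ = (∫ ω, f i ω ∂μ) * ∏ j ∈ s, ∫ ω, f j ω ∂μ := by
          rw [← ihe]; congr 1; apply integral_congr_ae; filter_upwards with ω
          simp [Finset.prod_apply]

lemma even_pair {d : ℕ} (b c : Fin d) :
    (∏ v : Fin d, (if Even ((if b = v then 1 else 0) + (if c = v then 1 else 0)) then (1:ℝ)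
      else 0)) = if b = c then 1 else 0 := by
  by_cases h : b = c
  · subst h
    rw [if_pos rfl]
    apply Finset.prod_eq_one
    intro v _
    by_cases hb : b = v <;> simp [hb]
  · rw [if_neg h]
    apply Finset.prod_eq_zero (Finset.mem_univ b)
    have : ((if b = b then 1 else 0) + (if c = b then 1 else 0)) = 1 := by
      simp [Ne.symm h]
    rw [this]
    simp

lemma even_four {d : ℕ} (b c e f : Fin d) :
    (∏ v : Fin d, (if Even (((if b = v then 1 else 0) + (if c = v then 1 else 0)) +
        ((if e = v then 1 else 0) + (if f = v then 1 else 0))) then (1:ℝ) else 0)) =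
      if ((b = c ∧ e = f) ∨ (b = e ∧ c = f) ∨ (b = f ∧ c = e)) then 1 else 0 := by
  by_cases h : (b = c ∧ e = f) ∨ (b = e ∧ c = f) ∨ (b = f ∧ c = e)
  · rw [if_pos h]
    apply Finset.prod_eq_one
    intro v _
    rw [if_pos]
    rcases h with ⟨h1, h2⟩ | ⟨h1, h2⟩ | ⟨h1, h2⟩ <;> subst h1 <;> subst h2 <;>
      split_ifs <;> decide
  · rw [if_neg h]
    push_neg at h
    obtain ⟨h1, h2, h3⟩ := h
    by_cases hc : c = b <;> by_cases he : e = b <;> by_cases hf : f = b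
    -- (T,T,T): contradiction
    · exact absurd (he.trans hf.symm) (h1 hc.symm)
    -- (T,T,F): count at b = 3, odd
    · apply Finset.prod_eq_zero (Finset.mem_univ b)
      simp [hc, he, hf, Nat.even_add_one]
    -- (T,F,T): count 3
    · apply Finset.prod_eq_zero (Finset.mem_univ b)
      simp [hc, he, hf, Nat.even_add_one]
    -- (T,F,F): zero at v = e; b = c, so e ≠ f
    · have hef : e ≠ f := fun hh => h1 hc.symm hh
      apply Finset.prod_eq_zero (Finset.mem_univ e)
      have hbe : b ≠ e := fun hh => he hh.symm
      have hce : c ≠ e := by rw [hc]; exact hbe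
      have hfe : f ≠ e := fun hh => hef hh.symm
      simp [hbe, hce, hfe]
    -- (F,T,T): count 3
    · apply Finset.prod_eq_zero (Finset.mem_univ b)
      simp [hc, he, hf, Nat.even_add_one]
    -- (F,T,F): b = e, so c ≠ f; zero at v = c
    · have hcf : c ≠ f := fun hh => h2 he.symm hh
      apply Finset.prod_eq_zero (Finset.mem_univ c)
      have hbc : b ≠ c := fun hh => hc hh.symm
      have hec : e ≠ c := by rw [he]; exact hbc
      have hfc : f ≠ c := fun hh => hcf hh.symm
      simp [hbc, hec, hfc]
    -- (F,F,T): b = f, so c ≠ e; zero at v = c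
    · have hce : c ≠ e := fun hh => h3 hf.symm hh
      apply Finset.prod_eq_zero (Finset.mem_univ c)
      have hbc : b ≠ c := fun hh => hc hh.symm
      have hec : e ≠ c := fun hh => hce hh.symm
      have hfc : f ≠ c := by rw [hf]; exact hbc
      simp [hbc, hec, hfc]
    -- (F,F,F): count at b = 1
    · apply Finset.prod_eq_zero (Finset.mem_univ b)
      simp [hc, he, hf, Nat.even_add_one]
/-- exponent of `g p.1 p.2` in the monomial attached to `x`. -/
def expo {M d : ℕ} (x : Fin (M + 1) → Fin d) (p : Fin M × Fin d) : ℕ :=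
  (if x p.1.castSucc = p.2 then 1 else 0) + (if x (Fin.last M) = p.2 then 1 else 0)

lemma prod_pow_expo {M d : ℕ} {Ω : Type*} (g : Fin M → Fin d → Ω → ℝ)
    (x : Fin (M + 1) → Fin d) (ω : Ω) :
    (∏ p : Fin M × Fin d, g p.1 p.2 ω ^ expo x p) =
      ∏ t : Fin M, g t (x t.castSucc) ω * g t (x (Fin.last M)) ω := by
  rw [Fintype.prod_prod_type]
  apply Finset.prod_congr rfl
  intro t _
  simp only [expo]
  have : ∀ v : Fin d, g t v ω ^
      ((if x t.castSucc = v then 1 else 0) + (if x (Fin.last M) = v then 1 else 0)) =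
      (if x t.castSucc = v then g t v ω else 1) *
      (if x (Fin.last M) = v then g t v ω else 1) := by
    intro v
    rw [pow_add]
    congr 1 <;> split_ifs <;> simp
  rw [Finset.prod_congr rfl fun v _ => this v, Finset.prod_mul_distrib,
    Finset.prod_ite_eq, Finset.prod_ite_eq]
  simp

lemma traceEstimator_eq {M d : ℕ} {Ω : Type*} (a : (Fin (M + 1) → Fin d) → ℝ)
    (g : Fin M → Fin d → Ω → ℝ) (ω : Ω) :
    traceEstimator a g ω =
      ∑ x : Fin (M + 1) → Fin d, a x * ∏ p : Fin M × Fin d, g p.1 p.2 ω ^ expo x p := by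
  rw [traceEstimator]
  simp only [diagEstimator]
  rw [← Equiv.sum_comp (Fin.snocEquiv (fun _ => Fin d))
    (fun x => a x * ∏ p : Fin M × Fin d, g p.1 p.2 ω ^ expo x p), Fintype.sum_prod_type]
  apply Finset.sum_congr rfl
  intro i _
  apply Finset.sum_congr rfl
  intro j _
  rw [prod_pow_expo]
  have hse : ((Fin.snocEquiv fun _ => Fin d) (i, j)) = Fin.snoc j i := rfl
  rw [hse]
  simp [Fin.snoc_castSucc, Fin.snoc_last]

lemma prod_even_expo {M d : ℕ} (x : Fin (M + 1) → Fin d) :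
    (∏ p : Fin M × Fin d, if Even (expo x p) then (1:ℝ) else 0) =
      if (∀ t : Fin M, x t.castSucc = x (Fin.last M)) then 1 else 0 := by
  rw [Fintype.prod_prod_type]
  have h : ∀ t : Fin M, (∏ v : Fin d, if Even (expo x (t, v)) then (1:ℝ) else 0) =
      if x t.castSucc = x (Fin.last M) then 1 else 0 := by
    intro t
    simp only [expo]
    exact even_pair _ _
  rw [Finset.prod_congr rfl fun t _ => h t, Finset.prod_boole]
  simp

lemma prod_even_expo2 {M d : ℕ} (x x' : Fin (M + 1) → Fin d) :
    (∏ p : Fin M × Fin d, if Even (expo x p + expo x' p) then (1:ℝ) else 0) =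
      if (∀ t : Fin M,
          (x t.castSucc = x (Fin.last M) ∧ x' t.castSucc = x' (Fin.last M)) ∨
          (x t.castSucc = x' t.castSucc ∧ x (Fin.last M) = x' (Fin.last M)) ∨
          (x t.castSucc = x' (Fin.last M) ∧ x (Fin.last M) = x' t.castSucc))
        then 1 else 0 := by
  rw [Fintype.prod_prod_type]
  have h : ∀ t : Fin M, (∏ v : Fin d, if Even (expo x (t, v) + expo x' (t, v)) then (1:ℝ) else 0) =
      if (x t.castSucc = x (Fin.last M) ∧ x' t.castSucc = x' (Fin.last M)) ∨
          (x t.castSucc = x' t.castSucc ∧ x (Fin.last M) = x' (Fin.last M)) ∨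
          (x t.castSucc = x' (Fin.last M) ∧ x (Fin.last M) = x' t.castSucc) then 1 else 0 := by
    intro t
    simp only [expo]
    exact even_four _ _ _ _
  rw [Finset.prod_congr rfl fun t _ => h t, Finset.prod_boole]
  simp

section Comb
variable {M d : ℕ}

def vmap (i i' : Fin d) (f : Fin M → Bool) : Fin (M + 1) → Fin d :=
  Fin.snoc (fun t => if f t then i' else i) i

lemma vmap_castSucc (i i' : Fin d) (f : Fin M → Bool) (t : Fin M) :
    vmap i i' f t.castSucc = if f t then i' else i := Fin.snoc_castSucc _ _ _

lemma vmap_last (i i' : Fin d) (f : Fin M → Bool) :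
    vmap i i' f (Fin.last M) = i := Fin.snoc_last _ _

lemma vmap_false (i i' : Fin d) :
    vmap i i' (fun _ : Fin M => false) = fun _ : Fin (M+1) => i := by
  funext k
  induction k using Fin.lastCases with
  | last => exact vmap_last i i' _
  | cast t => rw [vmap_castSucc]; simp

/-- diagonal-sum lemma : `∑_{x const} a x = ∑_j a (const j)` -/
lemma sum_const_filter (a : (Fin (M + 1) → Fin d) → ℝ) (F : ℝ → ℝ) :
    ∑ x ∈ Finset.univ.filter
        (fun x : Fin (M + 1) → Fin d => ∀ t : Fin M, x t.castSucc = x (Fin.last M)),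
      F (a x) = ∑ j : Fin d, F (a (fun _ => j)) := by
  apply Finset.sum_nbij' (i := fun x => x (Fin.last M)) (j := fun j _ => j)
  · intro x _; exact Finset.mem_univ _
  · intro j _
    simp
  · intro x hx
    simp only [Finset.mem_filter, Finset.mem_univ, true_and] at hx
    funext k
    induction k using Fin.lastCases with
    | last => rfl
    | cast t => exact (hx t).symm
  · intro j _; rfl
  · intro x hx
    simp only [Finset.mem_filter, Finset.mem_univ, true_and] at hx
    have hxx : (fun _ : Fin (M+1) => x (Fin.last M)) = x := by
      funext k
      induction k using Fin.lastCases with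
      | last => rfl
      | cast t => exact (hx t).symm
    rw [hxx]

lemma key_comb (a : (Fin (M + 1) → Fin d) → ℝ) :
    (∑ q : ((Fin (M + 1) → Fin d) × (Fin (M + 1) → Fin d)),
        a q.1 * a q.2 *
          (if (∀ t : Fin M,
              (q.1 t.castSucc = q.1 (Fin.last M) ∧ q.2 t.castSucc = q.2 (Fin.last M)) ∨
              (q.1 t.castSucc = q.2 t.castSucc ∧ q.1 (Fin.last M) = q.2 (Fin.last M)) ∨
              (q.1 t.castSucc = q.2 (Fin.last M) ∧ q.1 (Fin.last M) = q.2 t.castSucc))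
            then (1 : ℝ) else 0))
      - (∑ j : Fin d, a (fun _ => j)) ^ 2 ≤
    2 * ((∑ x : Fin (M + 1) → Fin d, a x ^ 2) - ∑ j : Fin d, (a (fun _ => j)) ^ 2) := by
  classical
  set L := Fin.last M
  set P : (Fin (M + 1) → Fin d) → (Fin (M + 1) → Fin d) → Prop := fun x x' => ∀ t : Fin M,
      (x t.castSucc = x L ∧ x' t.castSucc = x' L) ∨
      (x t.castSucc = x' t.castSucc ∧ x L = x' L) ∨
      (x t.castSucc = x' L ∧ x L = x' t.castSucc) with hP
  set T := ∑ j : Fin d, a (fun _ => j) with hT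
  set D := ∑ j : Fin d, (a (fun _ => j)) ^ 2 with hD
  set F := ∑ x : Fin (M + 1) → Fin d, a x ^ 2 with hF
  -- split the sum over pairs by whether the last coordinates agree
  have hsplit := Finset.sum_filter_add_sum_filter_not (Finset.univ : Finset (((Fin (M + 1) → Fin d) × (Fin (M + 1) → Fin d))))
    (fun q => q.1 L = q.2 L) (fun q => a q.1 * a q.2 * (if P q.1 q.2 then (1:ℝ) else 0))
  -- diagonal part equals F
  have hdiag : ∑ q ∈ Finset.univ.filter (fun q : ((Fin (M + 1) → Fin d) × (Fin (M + 1) → Fin d)) => q.1 L = q.2 L),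
      a q.1 * a q.2 * (if P q.1 q.2 then (1:ℝ) else 0) = F := by
    have hterm : ∀ q ∈ Finset.univ.filter (fun q : ((Fin (M + 1) → Fin d) × (Fin (M + 1) → Fin d)) => q.1 L = q.2 L),
        a q.1 * a q.2 * (if P q.1 q.2 then (1:ℝ) else 0)
          = if q.1 = q.2 then a q.1 * a q.2 else 0 := by
      intro q hq
      simp only [Finset.mem_filter, Finset.mem_univ, true_and] at hq
      by_cases hqq : q.1 = q.2
      · rw [if_pos hqq, if_pos, mul_one]
        intro t; exact Or.inr (Or.inl ⟨by rw [hqq], by rw [hqq]⟩)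
      · rw [if_neg hqq, if_neg, mul_zero]
        intro hp
        apply hqq
        funext k
        induction k using Fin.lastCases with
        | last => exact hq
        | cast t =>
          rcases hp t with ⟨h1, h2⟩ | ⟨h1, h2⟩ | ⟨h1, h2⟩
          · rw [h1, h2, hq]
          · exact h1
          · rw [h1, ← hq, h2]
    rw [Finset.sum_congr rfl hterm]
    rw [Finset.sum_subset (Finset.filter_subset _ _)]
    · rw [Fintype.sum_prod_type]
      have : ∀ x : Fin (M + 1) → Fin d, (∑ x' : Fin (M + 1) → Fin d, if x = x' then a x * a x' else 0) = a x ^ 2 := by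
        intro x
        rw [Finset.sum_ite_eq]
        simp [sq]
      rw [Finset.sum_congr rfl fun x _ => this x]
    · intro q _ hq
      simp only [Finset.mem_filter, Finset.mem_univ, true_and] at hq
      rw [if_neg]
      intro hqq
      exact hq (by rw [hqq])
  -- off-diagonal part
  set Q := Finset.univ.filter (fun q : ((Fin (M + 1) → Fin d) × (Fin (M + 1) → Fin d)) => ¬ q.1 L = q.2 L ∧ P q.1 q.2) with hQdef
  have hoff : ∑ q ∈ Finset.univ.filter (fun q : ((Fin (M + 1) → Fin d) × (Fin (M + 1) → Fin d)) => ¬ q.1 L = q.2 L),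
      a q.1 * a q.2 * (if P q.1 q.2 then (1:ℝ) else 0) = ∑ q ∈ Q, a q.1 * a q.2 := by
    rw [hQdef, ← Finset.filter_filter, Finset.sum_filter, Finset.sum_filter,
      Finset.sum_filter]
    apply Finset.sum_congr rfl
    intro q _
    by_cases h1 : q.1 L = q.2 L <;> by_cases h2 : P q.1 q.2 <;> simp [h1, h2]
  -- reindex the off-diagonal part by triples
  set R := Finset.univ.filter (fun r : Fin d × Fin d × (Fin M → Bool) => r.1 ≠ r.2.1) with hRdef
  have hre : ∑ q ∈ Q, a q.1 * a q.2 =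
      ∑ r ∈ R, a (vmap r.1 r.2.1 r.2.2) * a (vmap r.2.1 r.1 r.2.2) := by
    apply Finset.sum_nbij'
      (i := fun q => (q.1 L, q.2 L, fun t => decide (q.1 t.castSucc = q.2 L)))
      (j := fun r => (vmap r.1 r.2.1 r.2.2, vmap r.2.1 r.1 r.2.2))
    · intro q hq
      simp only [hQdef, Finset.mem_filter, Finset.mem_univ, true_and] at hq
      simp only [hRdef, Finset.mem_filter, Finset.mem_univ, true_and]
      exact hq.1
    · intro r hr
      simp only [hRdef, Finset.mem_filter, Finset.mem_univ, true_and] at hr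
      simp only [hQdef, Finset.mem_filter, Finset.mem_univ, true_and]
      constructor
      · rw [vmap_last, vmap_last]; exact hr
      · intro t
        rcases hft : r.2.2 t with _ | _
        · exact Or.inl ⟨by rw [vmap_castSucc, hft, vmap_last]; simp,
            by rw [vmap_castSucc, hft, vmap_last]; simp⟩
        · exact Or.inr (Or.inr ⟨by rw [vmap_castSucc, hft, vmap_last]; simp,
            by rw [vmap_castSucc, hft, vmap_last]; simp⟩)
    · -- left inverse
      intro q hq
      simp only [hQdef, Finset.mem_filter, Finset.mem_univ, true_and] at hq
      obtain ⟨hne, hp⟩ := hq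
      have h1 : vmap (q.1 L) (q.2 L) (fun t => decide (q.1 t.castSucc = q.2 L)) = q.1 := by
        funext k
        induction k using Fin.lastCases with
        | last => exact vmap_last _ _ _
        | cast t =>
          rw [vmap_castSucc]
          rcases hp t with ⟨ha, hb⟩ | ⟨ha, hb⟩ | ⟨ha, hb⟩
          · rw [decide_eq_false (show ¬q.1 t.castSucc = q.2 L by rw [ha]; exact hne)]
            simpa using ha.symm
          · exact absurd hb hne
          · rw [decide_eq_true ha]
            simpa using ha.symm
      have h2 : vmap (q.2 L) (q.1 L) (fun t => decide (q.1 t.castSucc = q.2 L)) = q.2 := by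
        funext k
        induction k using Fin.lastCases with
        | last => exact vmap_last _ _ _
        | cast t =>
          rw [vmap_castSucc]
          rcases hp t with ⟨ha, hb⟩ | ⟨ha, hb⟩ | ⟨ha, hb⟩
          · rw [decide_eq_false (show ¬q.1 t.castSucc = q.2 L by rw [ha]; exact hne)]
            simpa using hb.symm
          · exact absurd hb hne
          · rw [decide_eq_true ha]
            simpa using hb
      exact Prod.ext h1 h2
    · -- right inverse
      intro r hr
      simp only [hRdef, Finset.mem_filter, Finset.mem_univ, true_and] at hr
      refine Prod.ext (vmap_last _ _ _) (Prod.ext (vmap_last _ _ _) ?_)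
      funext t
      have hvl : vmap r.2.1 r.1 r.2.2 L = r.2.1 := vmap_last _ _ _
      have hvc : vmap r.1 r.2.1 r.2.2 t.castSucc = if r.2.2 t then r.2.1 else r.1 :=
        vmap_castSucc _ _ _ _
      show decide (vmap r.1 r.2.1 r.2.2 t.castSucc = vmap r.2.1 r.1 r.2.2 L) = r.2.2 t
      rw [hvl, hvc]
      rcases hft : r.2.2 t with _ | _
      · simp [hft, hr]
      · simp [hft]
    · -- summand compatibility
      intro q hq
      simp only [hQdef, Finset.mem_filter, Finset.mem_univ, true_and] at hq
      obtain ⟨hne, hp⟩ := hq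
      have h1 : vmap (q.1 L) (q.2 L) (fun t => decide (q.1 t.castSucc = q.2 L)) = q.1 := by
        funext k
        induction k using Fin.lastCases with
        | last => exact vmap_last _ _ _
        | cast t =>
          rw [vmap_castSucc]
          rcases hp t with ⟨ha, hb⟩ | ⟨ha, hb⟩ | ⟨ha, hb⟩
          · rw [decide_eq_false (show ¬q.1 t.castSucc = q.2 L by rw [ha]; exact hne)]
            simpa using ha.symm
          · exact absurd hb hne
          · rw [decide_eq_true ha]
            simpa using ha.symm
      have h2 : vmap (q.2 L) (q.1 L) (fun t => decide (q.1 t.castSucc = q.2 L)) = q.2 := by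
        funext k
        induction k using Fin.lastCases with
        | last => exact vmap_last _ _ _
        | cast t =>
          rw [vmap_castSucc]
          rcases hp t with ⟨ha, hb⟩ | ⟨ha, hb⟩ | ⟨ha, hb⟩
          · rw [decide_eq_false (show ¬q.1 t.castSucc = q.2 L by rw [ha]; exact hne)]
            simpa using hb.symm
          · exact absurd hb hne
          · rw [decide_eq_true ha]
            simpa using hb
      rw [h1, h2]
  -- split R by whether f is constantly false
  have hRsplit := Finset.sum_filter_add_sum_filter_not R
    (fun r : Fin d × Fin d × (Fin M → Bool) => r.2.2 = fun _ => false)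
    (fun r => a (vmap r.1 r.2.1 r.2.2) * a (vmap r.2.1 r.1 r.2.2))
  -- constant-f part equals T^2 - D
  have hconst : ∑ r ∈ R.filter (fun r => r.2.2 = fun _ => false),
      a (vmap r.1 r.2.1 r.2.2) * a (vmap r.2.1 r.1 r.2.2) = T ^ 2 - D := by
    have h1 : ∑ r ∈ R.filter (fun r => r.2.2 = fun _ => false),
        a (vmap r.1 r.2.1 r.2.2) * a (vmap r.2.1 r.1 r.2.2)
        = ∑ p ∈ (Finset.univ : Finset (Fin d × Fin d)).filter (fun p => p.1 ≠ p.2),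
            a (fun _ => p.1) * a (fun _ => p.2) := by
      apply Finset.sum_nbij' (i := fun r => (r.1, r.2.1))
        (j := fun p => (p.1, p.2, fun _ => false))
      · intro r hr
        simp only [hRdef, Finset.mem_filter, Finset.filter_filter, Finset.mem_univ,
          true_and] at hr ⊢
        exact hr.1
      · intro p hp
        simp only [Finset.mem_filter, Finset.mem_univ, true_and] at hp
        simp only [hRdef, Finset.filter_filter, Finset.mem_filter, Finset.mem_univ, true_and]
        exact ⟨hp, trivial⟩
      · intro r hr
        simp only [hRdef, Finset.filter_filter, Finset.mem_filter, Finset.mem_univ,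
          true_and] at hr
        exact Prod.ext rfl (Prod.ext rfl hr.2.symm)
      · intro p _; rfl
      · intro r hr
        simp only [hRdef, Finset.filter_filter, Finset.mem_filter, Finset.mem_univ,
          true_and] at hr
        rw [hr.2, vmap_false, vmap_false]
    have h2 : T ^ 2 = ∑ p : Fin d × Fin d, a (fun _ => p.1) * a (fun _ => p.2) := by
      rw [Fintype.sum_prod_type, hT, sq, Finset.sum_mul_sum]
    have h3 : ∑ p ∈ (Finset.univ : Finset (Fin d × Fin d)).filter (fun p => p.1 = p.2),
        a (fun _ => p.1) * a (fun _ => p.2) = D := by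
      rw [hD]
      apply Finset.sum_nbij' (i := fun p => p.1) (j := fun j => (j, j))
      · intro p _; exact Finset.mem_univ _
      · intro j _; simp
      · intro p hp
        simp only [Finset.mem_filter, Finset.mem_univ, true_and] at hp
        exact Prod.ext rfl hp
      · intro j _; rfl
      · intro p hp
        simp only [Finset.mem_filter, Finset.mem_univ, true_and] at hp
        rw [← hp, sq]
    have h4 := Finset.sum_filter_add_sum_filter_not (Finset.univ : Finset (Fin d × Fin d))
      (fun p => p.1 = p.2) (fun p => a (fun _ => p.1) * a (fun _ => p.2))
    have h5 : ∀ p : Fin d × Fin d, (¬ p.1 = p.2) = (p.1 ≠ p.2) := fun p => rfl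
    rw [h1]
    simp only [Ne] at h4 ⊢
    linarith [h4, h3, h2]
  -- nonconstant-f part
  set R1 := R.filter (fun r : Fin d × Fin d × (Fin M → Bool) =>
    ¬ r.2.2 = fun _ => false) with hR1def
  have hR1mem : ∀ r : Fin d × Fin d × (Fin M → Bool), r ∈ R1 ↔
      (r.1 ≠ r.2.1 ∧ ¬ r.2.2 = fun _ => false) := by
    intro r
    simp [hR1def, hRdef, Finset.mem_filter]
  have hswap : ∑ r ∈ R1, a (vmap r.2.1 r.1 r.2.2) ^ 2 =
      ∑ r ∈ R1, a (vmap r.1 r.2.1 r.2.2) ^ 2 := by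
    apply Finset.sum_nbij' (i := fun r : Fin d × Fin d × (Fin M → Bool) => (r.2.1, r.1, r.2.2))
      (j := fun r : Fin d × Fin d × (Fin M → Bool) => (r.2.1, r.1, r.2.2))
    · intro r hr
      rw [hR1mem] at hr ⊢
      exact ⟨hr.1.symm, hr.2⟩
    · intro r hr
      rw [hR1mem] at hr ⊢
      exact ⟨hr.1.symm, hr.2⟩
    · intro r _; rfl
    · intro r _; rfl
    · intro r _; rfl
  have hB : ∑ r ∈ R1, a (vmap r.1 r.2.1 r.2.2) * a (vmap r.2.1 r.1 r.2.2)
      ≤ ∑ r ∈ R1, a (vmap r.1 r.2.1 r.2.2) ^ 2 := by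
    have hterm : ∀ r ∈ R1, a (vmap r.1 r.2.1 r.2.2) * a (vmap r.2.1 r.1 r.2.2)
        ≤ (a (vmap r.1 r.2.1 r.2.2) ^ 2 + a (vmap r.2.1 r.1 r.2.2) ^ 2) / 2 := by
      intro r _
      nlinarith [sq_nonneg (a (vmap r.1 r.2.1 r.2.2) - a (vmap r.2.1 r.1 r.2.2))]
    calc ∑ r ∈ R1, a (vmap r.1 r.2.1 r.2.2) * a (vmap r.2.1 r.1 r.2.2)
        ≤ ∑ r ∈ R1, (a (vmap r.1 r.2.1 r.2.2) ^ 2 + a (vmap r.2.1 r.1 r.2.2) ^ 2) / 2 :=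
          Finset.sum_le_sum hterm
      _ = ((∑ r ∈ R1, a (vmap r.1 r.2.1 r.2.2) ^ 2) +
            ∑ r ∈ R1, a (vmap r.2.1 r.1 r.2.2) ^ 2) / 2 := by
          rw [← Finset.sum_div, Finset.sum_add_distrib]
      _ = ∑ r ∈ R1, a (vmap r.1 r.2.1 r.2.2) ^ 2 := by rw [hswap]; ring
  -- the image of vmap on R1 consists of nonconstant tuples
  have hinj : ∀ x ∈ R1, ∀ y ∈ R1,
      vmap x.1 x.2.1 x.2.2 = vmap y.1 y.2.1 y.2.2 → x = y := by
    intro x hx y hy hv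
    rw [hR1mem] at hx hy
    have hij : x.1 = y.1 := by
      have h := congrFun hv (Fin.last M)
      rwa [vmap_last, vmap_last] at h
    obtain ⟨t0, ht0⟩ : ∃ t, x.2.2 t = true := by
      by_contra hcon
      push_neg at hcon
      exact hx.2 (funext fun t => by simpa using hcon t)
    have h5 := congrFun hv t0.castSucc
    rw [vmap_castSucc, vmap_castSucc, ht0] at h5
    simp only [if_true] at h5
    have hii : x.2.1 = y.2.1 := by
      rcases hyt : y.2.2 t0 with _ | _
      · rw [hyt] at h5
        simp only [Bool.false_eq_true, if_false] at h5
        exact absurd (h5.trans hij.symm) hx.1.symm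
      · rw [hyt] at h5
        simpa using h5
    have hff : x.2.2 = y.2.2 := by
      funext t
      have h6 := congrFun hv t.castSucc
      rw [vmap_castSucc, vmap_castSucc] at h6
      rcases hxt : x.2.2 t with _ | _ <;> rcases hyt : y.2.2 t with _ | _
      · rfl
      · rw [hxt, hyt] at h6
        simp only [Bool.false_eq_true, if_false, if_true] at h6
        exact absurd (h6.trans hii.symm) hx.1
      · rw [hxt, hyt] at h6
        simp only [Bool.false_eq_true, if_false, if_true] at h6
        exact absurd (h6.trans hij.symm).symm hx.1
      · rfl
    exact Prod.ext hij (Prod.ext hii hff)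
  have himg : ∑ r ∈ R1, a (vmap r.1 r.2.1 r.2.2) ^ 2 ≤
      ∑ x ∈ Finset.univ.filter
        (fun x : Fin (M + 1) → Fin d => ¬ ∀ t : Fin M, x t.castSucc = x (Fin.last M)), a x ^ 2 := by
    have heq : ∑ x ∈ R1.image (fun r : Fin d × Fin d × (Fin M → Bool) =>
        vmap r.1 r.2.1 r.2.2), a x ^ 2 = ∑ r ∈ R1, a (vmap r.1 r.2.1 r.2.2) ^ 2 :=
      Finset.sum_image hinj
    rw [← heq]
    apply Finset.sum_le_sum_of_subset_of_nonneg
    · intro x hx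
      simp only [Finset.mem_image] at hx
      obtain ⟨r, hr, hrx⟩ := hx
      rw [hR1mem] at hr
      simp only [Finset.mem_filter, Finset.mem_univ, true_and]
      intro hall
      obtain ⟨t0, ht0⟩ : ∃ t, r.2.2 t = true := by
        by_contra hcon
        push_neg at hcon
        exact hr.2 (funext fun t => by simpa using hcon t)
      have h7 := hall t0
      rw [← hrx, vmap_castSucc, vmap_last, ht0] at h7
      simp only [if_true] at h7
      exact hr.1 h7.symm
    · intro x _ _
      exact sq_nonneg _
  -- diagonal part of F
  have hFD := Finset.sum_filter_add_sum_filter_not (Finset.univ : Finset (Fin (M + 1) → Fin d))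
    (fun x => ∀ t : Fin M, x t.castSucc = x (Fin.last M)) (fun x => a x ^ 2)
  have hDD : ∑ x ∈ Finset.univ.filter
      (fun x : Fin (M + 1) → Fin d => ∀ t : Fin M, x t.castSucc = x (Fin.last M)), a x ^ 2 = D :=
    sum_const_filter a (fun y => y ^ 2)
  -- put everything together
  have htotal : ∑ q : ((Fin (M + 1) → Fin d) × (Fin (M + 1) → Fin d)), a q.1 * a q.2 * (if P q.1 q.2 then (1:ℝ) else 0)
      = F + ((T ^ 2 - D) +
        ∑ r ∈ R1, a (vmap r.1 r.2.1 r.2.2) * a (vmap r.2.1 r.1 r.2.2)) := by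
    rw [← hsplit, hdiag, hoff, hre, ← hRsplit, hconst]
  have hgoalEq : (∑ q : ((Fin (M + 1) → Fin d) × (Fin (M + 1) → Fin d)), a q.1 * a q.2 *
      (if (∀ t : Fin M,
          (q.1 t.castSucc = q.1 L ∧ q.2 t.castSucc = q.2 L) ∨
          (q.1 t.castSucc = q.2 t.castSucc ∧ q.1 L = q.2 L) ∨
          (q.1 t.castSucc = q.2 L ∧ q.1 L = q.2 t.castSucc))
        then (1 : ℝ) else 0)) =
      ∑ q : ((Fin (M + 1) → Fin d) × (Fin (M + 1) → Fin d)), a q.1 * a q.2 * (if P q.1 q.2 then (1:ℝ) else 0) :=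
    Finset.sum_congr rfl fun q _ => by
      congr 1
  rw [hgoalEq, htotal]
  linarith [hB, himg, hFD, hDD]

end Comb

theorem trace_estimator_variance_rademacher_le
    {M d : ℕ} (hM : 1 ≤ M) (hd : 1 ≤ d)
    (a : (Fin (M + 1) → Fin d) → ℝ)
    {Ω : Type*} [MeasureSpace Ω] [IsProbabilityMeasure (ℙ : Measure Ω)]
    (g : Fin M → Fin d → Ω → ℝ)
    (hmeas : ∀ n i, Measurable (g n i))
    (hindep : iIndepFun (fun p : Fin M × Fin d => g p.1 p.2) ℙ)
    (hdist : ∀ n i, Measure.map (g n i) ℙ = radMeasure)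
    :
    variance (traceEstimator a g) ℙ ≤
      2 * ((∑ x : Fin (M + 1) → Fin d, (a x) ^ 2) - ∑ j : Fin d, (a (fun _ => j)) ^ 2) := by
  classical
  -- a.e. bound on the Rademacher variables
  have habs : ∀ p : Fin M × Fin d, ∀ᵐ ω ∂(ℙ : Measure Ω), |g p.1 p.2 ω| ≤ 1 := by
    intro p
    have hnull : (ℙ : Measure Ω) ((g p.1 p.2) ⁻¹' ({1, -1} : Set ℝ)ᶜ) = 0 := by
      have hms : MeasurableSet (({1, -1} : Set ℝ)ᶜ) :=
        ((Set.toFinite ({1, -1} : Set ℝ)).measurableSet).compl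
      rw [← Measure.map_apply (hmeas p.1 p.2) hms, hdist, radMeasure_compl_pm]
    rw [ae_iff]
    refine measure_mono_null ?_ hnull
    intro ω hω
    simp only [Set.mem_setOf_eq, not_le] at hω
    simp only [Set.mem_preimage, Set.mem_compl_iff, Set.mem_insert_iff,
      Set.mem_singleton_iff]
    rintro (h1 | h1) <;> rw [h1] at hω <;> norm_num at hω
  -- moments of a single variable
  have hmom : ∀ p : Fin M × Fin d, ∀ k : ℕ,
      ∫ ω, (g p.1 p.2 ω) ^ k ∂ℙ = if Even k then (1:ℝ) else 0 := by
    intro p k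
    calc ∫ ω, (g p.1 p.2 ω) ^ k ∂ℙ
        = ∫ y, y ^ k ∂(Measure.map (g p.1 p.2) ℙ) :=
          (integral_map (hmeas p.1 p.2).aemeasurable
            ((measurable_id.pow_const k).aestronglyMeasurable)).symm
      _ = ∫ y, y ^ k ∂radMeasure := by rw [hdist]
      _ = if Even k then (1:ℝ) else 0 := radMeasure_integral_pow k
  -- expectation of monomials
  have hmono : ∀ e : Fin M × Fin d → ℕ,
      (∀ᵐ ω ∂(ℙ : Measure Ω), |∏ p : Fin M × Fin d, (g p.1 p.2 ω) ^ e p| ≤ 1) ∧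
      ∫ ω, ∏ p : Fin M × Fin d, (g p.1 p.2 ω) ^ e p ∂ℙ
        = ∏ p : Fin M × Fin d, (if Even (e p) then (1:ℝ) else 0) := by
    intro e
    have hind2 : iIndepFun
        (fun (p : Fin M × Fin d) ω => (g p.1 p.2 ω) ^ e p) ℙ :=
      hindep.comp (fun p (x : ℝ) => x ^ e p) (fun p => measurable_id.pow_const _)
    have hm2 : ∀ p : Fin M × Fin d, Measurable fun ω => (g p.1 p.2 ω) ^ e p :=
      fun p => (hmeas p.1 p.2).pow_const _
    have hb2 : ∀ p : Fin M × Fin d, ∀ᵐ ω ∂(ℙ : Measure Ω), |(g p.1 p.2 ω) ^ e p| ≤ 1 := by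
      intro p
      filter_upwards [habs p] with ω h
      rw [abs_pow]
      exact pow_le_one₀ (abs_nonneg _) h
    have h := indep_prod_integral _ hind2 hm2 hb2 Finset.univ
    refine ⟨h.1, ?_⟩
    rw [h.2]
    exact Finset.prod_congr rfl fun p _ => hmom p (e p)
  -- representation of X
  have hXrep : ∀ ω, traceEstimator a g ω =
      ∑ x : Fin (M + 1) → Fin d, a x * ∏ p : Fin M × Fin d, (g p.1 p.2 ω) ^ expo x p :=
    traceEstimator_eq a g
  have hXfun : traceEstimator a g =
      fun ω => ∑ x : Fin (M + 1) → Fin d, a x * ∏ p : Fin M × Fin d, (g p.1 p.2 ω) ^ expo x p :=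
    funext hXrep
  have hXmeas : Measurable (traceEstimator a g) := by
    rw [hXfun]
    exact Finset.measurable_sum _ fun x _ =>
      (Finset.measurable_prod _ fun p _ => (hmeas p.1 p.2).pow_const _).const_mul _
  have hXbd : ∀ᵐ ω ∂(ℙ : Measure Ω),
      |traceEstimator a g ω| ≤ ∑ x : Fin (M + 1) → Fin d, |a x| := by
    have hall : ∀ᵐ ω ∂(ℙ : Measure Ω), ∀ x : Fin (M + 1) → Fin d,
        |∏ p : Fin M × Fin d, (g p.1 p.2 ω) ^ expo x p| ≤ 1 :=
      ae_all_iff.mpr fun x => (hmono (expo x)).1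
    filter_upwards [hall] with ω h
    rw [hXrep ω]
    calc |∑ x : Fin (M + 1) → Fin d, a x * ∏ p : Fin M × Fin d, (g p.1 p.2 ω) ^ expo x p|
        ≤ ∑ x : Fin (M + 1) → Fin d, |a x * ∏ p : Fin M × Fin d, (g p.1 p.2 ω) ^ expo x p| :=
          Finset.abs_sum_le_sum_abs _ _
      _ ≤ ∑ x : Fin (M + 1) → Fin d, |a x| := by
          refine Finset.sum_le_sum fun x _ => ?_
          rw [abs_mul]
          exact mul_le_of_le_one_right (abs_nonneg _) (h x)
  have hXLp : MemLp (traceEstimator a g) 2 ℙ :=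
    MemLp.of_bound hXmeas.aestronglyMeasurable _ hXbd
  rw [variance_eq_sub hXLp]
  -- integrability of monomials
  have hPint : ∀ e : Fin M × Fin d → ℕ,
      Integrable (fun ω => ∏ p : Fin M × Fin d, (g p.1 p.2 ω) ^ e p) ℙ := fun e =>
    aux_integrable (Finset.measurable_prod _ fun p _ => (hmeas p.1 p.2).pow_const _)
      (hmono e).1
  -- expectation of X
  have hEX : (∫ ω, traceEstimator a g ω ∂ℙ) = ∑ j : Fin d, a (fun _ => j) := by
    rw [hXfun]
    rw [integral_finset_sum _ fun x _ => ((hPint (expo x)).const_mul _)]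
    have h1 : ∀ x : Fin (M + 1) → Fin d,
        ∫ ω, a x * ∏ p : Fin M × Fin d, (g p.1 p.2 ω) ^ expo x p ∂ℙ =
          a x * (if (∀ t : Fin M, x t.castSucc = x (Fin.last M)) then (1:ℝ) else 0) := by
      intro x
      rw [integral_const_mul, (hmono (expo x)).2, prod_even_expo]
    rw [Finset.sum_congr rfl fun x _ => h1 x]
    have h2 : ∀ x : Fin (M + 1) → Fin d,
        a x * (if (∀ t : Fin M, x t.castSucc = x (Fin.last M)) then (1:ℝ) else 0) =
          if (∀ t : Fin M, x t.castSucc = x (Fin.last M)) then a x else 0 := by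
      intro x
      rw [mul_ite, mul_one, mul_zero]
    rw [Finset.sum_congr rfl fun x _ => h2 x, ← Finset.sum_filter]
    exact sum_const_filter a id
  -- expectation of X²
  have hXsq : ∀ ω, (traceEstimator a g ω) ^ 2 =
      ∑ q : ((Fin (M + 1) → Fin d) × (Fin (M + 1) → Fin d)),
        a q.1 * a q.2 * ∏ p : Fin M × Fin d, (g p.1 p.2 ω) ^ (expo q.1 p + expo q.2 p) := by
    intro ω
    rw [hXrep ω, sq, Finset.sum_mul_sum, Fintype.sum_prod_type]
    refine Finset.sum_congr rfl fun x _ => Finset.sum_congr rfl fun x' _ => ?_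
    have hprod : (∏ p : Fin M × Fin d, (g p.1 p.2 ω) ^ (expo x p + expo x' p)) =
        (∏ p : Fin M × Fin d, (g p.1 p.2 ω) ^ expo x p) *
          ∏ p : Fin M × Fin d, (g p.1 p.2 ω) ^ expo x' p := by
      rw [← Finset.prod_mul_distrib]
      exact Finset.prod_congr rfl fun p _ => pow_add _ _ _
    rw [hprod]
    ring
  have hEX2 : (∫ ω, (traceEstimator a g ω) ^ 2 ∂ℙ) =
      ∑ q : ((Fin (M + 1) → Fin d) × (Fin (M + 1) → Fin d)),
        a q.1 * a q.2 *
          (if (∀ t : Fin M,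
              (q.1 t.castSucc = q.1 (Fin.last M) ∧ q.2 t.castSucc = q.2 (Fin.last M)) ∨
              (q.1 t.castSucc = q.2 t.castSucc ∧ q.1 (Fin.last M) = q.2 (Fin.last M)) ∨
              (q.1 t.castSucc = q.2 (Fin.last M) ∧ q.1 (Fin.last M) = q.2 t.castSucc))
            then (1 : ℝ) else 0) := by
    have hfun : (fun ω => (traceEstimator a g ω) ^ 2) =
        fun ω => ∑ q : ((Fin (M + 1) → Fin d) × (Fin (M + 1) → Fin d)),
          a q.1 * a q.2 * ∏ p : Fin M × Fin d, (g p.1 p.2 ω) ^ (expo q.1 p + expo q.2 p) :=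
      funext hXsq
    rw [hfun]
    rw [integral_finset_sum _ fun q _ =>
      ((hPint (fun p => expo q.1 p + expo q.2 p)).const_mul _)]
    refine Finset.sum_congr rfl fun q _ => ?_
    rw [integral_const_mul, (hmono (fun p => expo q.1 p + expo q.2 p)).2, prod_even_expo2]
  have hsq : (∫ ω, (traceEstimator a g) ω ^ 2 ∂ℙ) = ∫ ω, (traceEstimator a g ω) ^ 2 ∂ℙ := rfl
  show (∫ ω, ((traceEstimator a g) ^ 2) ω ∂ℙ) - (∫ ω, traceEstimator a g ω ∂ℙ) ^ 2 ≤ _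
  have hpow : (∫ ω, ((traceEstimator a g) ^ 2) ω ∂ℙ) = ∫ ω, (traceEstimator a g ω) ^ 2 ∂ℙ := rfl
  rw [hpow, hEX2, hEX]
  exact key_comb a
end
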